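/- The Dobrushin ergodic coefficient is sub-multiplicative on stochastic matrices: for row-stochastic matrices P and Q of the same size, δ(P·Q) ≤ δ(P)·δ(Q). -/

import Mathlib

/-- Dobrushin's ergodic coefficient `δ(P) = 1 − min_{i≠j} ∑_k min(P_{i,k}, P_{j,k})`. -/
noncomputable def dobrushin {n : ℕ} (P : Matrix (Fin n) (Fin n) ℝ) : ℝ :=
  1 - ⨅ p : {q : Fin n × Fin n // q.1 ≠ q.2}, ∑ k, min (P p.1.1 k) (P p.1.2 k)

lemma min_half (a b : ℝ) : min a b = (a + b - |a - b|) / 2 := by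
  rcases le_total a b with h | h
  · rw [min_eq_left h, abs_of_nonpos (by linarith)]; ring
  · rw [min_eq_right h, abs_of_nonneg (by linarith)]; ring

lemma sum_min_eq {n : ℕ} (f g : Fin n → ℝ) (hf : ∑ k, f k = 1) (hg : ∑ k, g k = 1) :
    ∑ k, min (f k) (g k) = 1 - (∑ k, |f k - g k|) / 2 := by
  have h : ∀ k ∈ Finset.univ, min (f k) (g k) = (f k + g k - |f k - g k|) / 2 :=
    fun k _ => min_half _ _
  rw [Finset.sum_congr rfl h, ← Finset.sum_div, Finset.sum_sub_distrib,
    Finset.sum_add_distrib, hf, hg]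
  ring

lemma pair_le {n : ℕ} (Q : Matrix (Fin n) (Fin n) ℝ) (hQrow : ∀ i, ∑ j, Q i j = 1)
    (a b : Fin n) (hab : a ≠ b) :
    (∑ k, |Q a k - Q b k|) / 2 ≤ dobrushin Q := by
  have h1 : (⨅ p : {q : Fin n × Fin n // q.1 ≠ q.2}, ∑ k, min (Q p.1.1 k) (Q p.1.2 k))
      ≤ ∑ k, min (Q a k) (Q b k) :=
    ciInf_le (Set.finite_range _).bddBelow (⟨(a, b), hab⟩ : {q : Fin n × Fin n // q.1 ≠ q.2})
  rw [sum_min_eq _ _ (hQrow a) (hQrow b)] at h1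
  unfold dobrushin; linarith

lemma delta_nonneg {n : ℕ} (Q : Matrix (Fin n) (Fin n) ℝ) (hQrow : ∀ i, ∑ j, Q i j = 1)
    (a b : Fin n) (hab : a ≠ b) : 0 ≤ dobrushin Q := by
  have h1 : (⨅ p : {q : Fin n × Fin n // q.1 ≠ q.2}, ∑ k, min (Q p.1.1 k) (Q p.1.2 k))
      ≤ ∑ k, min (Q a k) (Q b k) :=
    ciInf_le (Set.finite_range _).bddBelow (⟨(a, b), hab⟩ : {q : Fin n × Fin n // q.1 ≠ q.2})
  have h2 : ∑ k, min (Q a k) (Q b k) ≤ ∑ k, Q a k :=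
    Finset.sum_le_sum fun k _ => min_le_left _ _
  rw [hQrow a] at h2
  unfold dobrushin; linarith

lemma core {n : ℕ} (Q : Matrix (Fin n) (Fin n) ℝ)
    (hd0 : 0 ≤ dobrushin Q)
    (hpair : ∀ a b : Fin n, a ≠ b → ∑ k, |Q a k - Q b k| ≤ 2 * dobrushin Q)
    (x : Fin n → ℝ) (hx : ∑ l, x l = 0) :
    (∑ k, |∑ l, x l * Q l k|) / 2 ≤ dobrushin Q * ((∑ l, |x l|) / 2) := by
  set c : ℝ := (∑ l, |x l|) / 2 with hc
  have hc0 : 0 ≤ c := by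
    have : 0 ≤ ∑ l, |x l| := Finset.sum_nonneg fun l _ => abs_nonneg _
    positivity
  rcases eq_or_lt_of_le hc0 with hczero | hcpos
  · -- c = 0, so all x l = 0
    have hsum0 : ∑ l, |x l| = 0 := by
      have := hczero.symm
      rw [hc] at this; linarith
    have hx0 : ∀ l ∈ Finset.univ, |x l| = 0 :=
      (Finset.sum_eq_zero_iff_of_nonneg (fun l _ => abs_nonneg _)).1 hsum0
    have hx0' : ∀ l, x l = 0 := fun l => abs_eq_zero.1 (hx0 l (Finset.mem_univ l))
    have : ∀ k ∈ Finset.univ, |∑ l, x l * Q l k| = 0 := by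
      intro k _
      simp [hx0']
    rw [Finset.sum_congr rfl this]
    simp
    positivity
  · -- c > 0
    set u : Fin n → ℝ := fun l => max (x l) 0 with hu
    set v : Fin n → ℝ := fun l => max (-(x l)) 0 with hv
    have hun : ∀ l, 0 ≤ u l := fun l => le_max_right _ _
    have hvn : ∀ l, 0 ≤ v l := fun l => le_max_right _ _
    have huv : ∀ l, u l - v l = x l := by
      intro l; rcases le_total (x l) 0 with h | h
      · rw [hu, hv]; simp only
        rw [max_eq_right h, max_eq_left (neg_nonneg.mpr h)]; ring
      · rw [hu, hv]; simp only
        rw [max_eq_left h, max_eq_right (neg_nonpos.mpr h)]; ring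
    have habs : ∀ l, u l + v l = |x l| := by
      intro l; rcases le_total (x l) 0 with h | h
      · rw [hu, hv]; simp only
        rw [max_eq_right h, max_eq_left (neg_nonneg.mpr h), abs_of_nonpos h]; ring
      · rw [hu, hv]; simp only
        rw [max_eq_left h, max_eq_right (neg_nonpos.mpr h), abs_of_nonneg h]; ring
    have hsub : ∑ l, u l - ∑ l, v l = 0 := by
      rw [← Finset.sum_sub_distrib, Finset.sum_congr rfl (fun l _ => huv l), hx]
    have hadd : ∑ l, u l + ∑ l, v l = 2 * c := by
      rw [← Finset.sum_add_distrib, Finset.sum_congr rfl (fun l _ => habs l), hc]; ring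
    have hsu : ∑ l, u l = c := by linarith
    have hsv : ∑ l, v l = c := by linarith
    -- key identity
    have hkey : ∀ k, (∑ a, ∑ b, u a * v b * (Q a k - Q b k)) = c * (∑ l, x l * Q l k) := by
      intro k
      have h1 : ∑ a, ∑ b, u a * v b * Q a k = (∑ a, u a * Q a k) * ∑ b, v b := by
        rw [Finset.sum_mul_sum]
        exact Finset.sum_congr rfl fun a _ => Finset.sum_congr rfl fun b _ => by ring
      have h2 : ∑ a, ∑ b, u a * v b * Q b k = (∑ a, u a) * ∑ b, v b * Q b k := by
        rw [Finset.sum_mul_sum]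
        exact Finset.sum_congr rfl fun a _ => Finset.sum_congr rfl fun b _ => by ring
      have h3 : ∑ a, ∑ b, u a * v b * (Q a k - Q b k)
          = (∑ a, ∑ b, u a * v b * Q a k) - ∑ a, ∑ b, u a * v b * Q b k := by
        rw [← Finset.sum_sub_distrib]
        refine Finset.sum_congr rfl fun a _ => ?_
        rw [← Finset.sum_sub_distrib]
        exact Finset.sum_congr rfl fun b _ => by ring
      have h4 : ∑ l, x l * Q l k = ∑ l, u l * Q l k - ∑ l, v l * Q l k := by
        rw [← Finset.sum_sub_distrib]
        refine Finset.sum_congr rfl fun l _ => ?_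
        rw [← huv l]; ring
      rw [h3, h1, h2, hsu, hsv, h4]; ring
    -- triangle inequality per k
    have hstep : ∀ k, |∑ l, x l * Q l k|
        ≤ (∑ a, ∑ b, u a * v b * |Q a k - Q b k|) / c := by
      intro k
      have h5 : |∑ a, ∑ b, u a * v b * (Q a k - Q b k)|
          ≤ ∑ a, ∑ b, u a * v b * |Q a k - Q b k| := by
        refine (Finset.abs_sum_le_sum_abs _ _).trans (Finset.sum_le_sum fun a _ => ?_)
        refine (Finset.abs_sum_le_sum_abs _ _).trans (Finset.sum_le_sum fun b _ => ?_)
        rw [abs_mul, abs_mul, abs_of_nonneg (hun a), abs_of_nonneg (hvn b)]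
      rw [le_div_iff₀ hcpos]
      calc |∑ l, x l * Q l k| * c = |c * ∑ l, x l * Q l k| := by
            rw [abs_mul, abs_of_nonneg hc0]; ring
        _ = |∑ a, ∑ b, u a * v b * (Q a k - Q b k)| := by rw [hkey k]
        _ ≤ _ := h5
    -- sum over k and swap
    have hswap : ∑ k, ∑ a, ∑ b, u a * v b * |Q a k - Q b k|
        = ∑ a, ∑ b, u a * v b * ∑ k, |Q a k - Q b k| := by
      rw [Finset.sum_comm]
      refine Finset.sum_congr rfl fun a _ => ?_
      rw [Finset.sum_comm]
      refine Finset.sum_congr rfl fun b _ => ?_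
      rw [Finset.mul_sum]
    have hbound : ∑ a, ∑ b, u a * v b * ∑ k, |Q a k - Q b k|
        ≤ ∑ a, ∑ b, u a * v b * (2 * dobrushin Q) := by
      refine Finset.sum_le_sum fun a _ => Finset.sum_le_sum fun b _ => ?_
      rcases eq_or_ne a b with rfl | hab
      · simp only [sub_self, abs_zero, Finset.sum_const_zero, mul_zero]
        positivity
      · exact mul_le_mul_of_nonneg_left (hpair a b hab) (mul_nonneg (hun a) (hvn b))
    have hfinal : ∑ a, ∑ b, u a * v b * (2 * dobrushin Q) = 2 * dobrushin Q * c * c := by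
      have : ∀ a ∈ Finset.univ, ∑ b, u a * v b * (2 * dobrushin Q)
          = u a * (c * (2 * dobrushin Q)) := by
        intro a _
        rw [← Finset.sum_mul, ← Finset.mul_sum, hsv]; ring
      rw [Finset.sum_congr rfl this, ← Finset.sum_mul, hsu]; ring
    have hcpos' : 0 < c := hcpos
    have hsum : ∑ k, |∑ l, x l * Q l k|
        ≤ (∑ a, ∑ b, u a * v b * ∑ k, |Q a k - Q b k|) / c := by
      calc ∑ k, |∑ l, x l * Q l k|
          ≤ ∑ k, (∑ a, ∑ b, u a * v b * |Q a k - Q b k|) / c :=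
            Finset.sum_le_sum fun k _ => hstep k
        _ = (∑ k, ∑ a, ∑ b, u a * v b * |Q a k - Q b k|) / c := by
            rw [Finset.sum_div]
        _ = _ := by rw [hswap]
    have : ∑ k, |∑ l, x l * Q l k| ≤ 2 * dobrushin Q * c := by
      calc ∑ k, |∑ l, x l * Q l k|
          ≤ (∑ a, ∑ b, u a * v b * ∑ k, |Q a k - Q b k|) / c := hsum
        _ ≤ (2 * dobrushin Q * c * c) / c := by
            gcongr
            exact hbound.trans_eq hfinal
        _ = 2 * dobrushin Q * c := by field_simp
    linarith

/-- Sub-multiplicativity of the Dobrushin ergodic coefficient on row-stochastic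
matrices: `δ(P·Q) ≤ δ(P)·δ(Q)`. -/
theorem stmt4 {n : ℕ} (P Q : Matrix (Fin n) (Fin n) ℝ)
    (hPnn : ∀ i j, 0 ≤ P i j) (hProw : ∀ i, ∑ j, P i j = 1)
    (hQnn : ∀ i j, 0 ≤ Q i j) (hQrow : ∀ i, ∑ j, Q i j = 1) :
    dobrushin (P * Q) ≤ dobrushin P * dobrushin Q := by
  have hPQrow : ∀ i, ∑ j, (P * Q) i j = 1 := by
    intro i
    simp only [Matrix.mul_apply]
    rw [Finset.sum_comm]
    have : ∀ l ∈ Finset.univ, ∑ j, P i l * Q l j = P i l := by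
      intro l _
      rw [← Finset.mul_sum, hQrow, mul_one]
    rw [Finset.sum_congr rfl this, hProw]
  rcases isEmpty_or_nonempty {q : Fin n × Fin n // q.1 ≠ q.2} with hE | hNE
  · have h1 : ∀ (A : Matrix (Fin n) (Fin n) ℝ), dobrushin A = 1 := by
      intro A
      unfold dobrushin
      rw [Real.iInf_of_isEmpty]
      ring
    rw [h1, h1, h1]; norm_num
  · haveI : Nonempty {q : Fin n × Fin n // q.1 ≠ q.2} := hNE
    obtain ⟨⟨⟨a0, b0⟩, hab0⟩⟩ := hNE
    have hd0Q : 0 ≤ dobrushin Q := delta_nonneg Q hQrow a0 b0 hab0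
    have hd0P : 0 ≤ dobrushin P := delta_nonneg P hProw a0 b0 hab0
    unfold dobrushin
    rw [sub_le_iff_le_add]
    have key : ∀ p : {q : Fin n × Fin n // q.1 ≠ q.2},
        1 - (1 - ⨅ p : {q : Fin n × Fin n // q.1 ≠ q.2},
              ∑ k, min (P p.1.1 k) (P p.1.2 k)) *
            (1 - ⨅ p : {q : Fin n × Fin n // q.1 ≠ q.2},
              ∑ k, min (Q p.1.1 k) (Q p.1.2 k))
          ≤ ∑ k, min ((P * Q) p.1.1 k) ((P * Q) p.1.2 k) := by
      rintro ⟨⟨i, j⟩, hij⟩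
      simp only
      rw [sum_min_eq _ _ (hPQrow i) (hPQrow j)]
      have hdiff : ∀ k, (P * Q) i k - (P * Q) j k = ∑ l, (P i l - P j l) * Q l k := by
        intro k
        simp only [Matrix.mul_apply]
        rw [← Finset.sum_sub_distrib]
        exact Finset.sum_congr rfl fun l _ => by ring
      have hx : ∑ l, (P i l - P j l) = 0 := by
        rw [Finset.sum_sub_distrib, hProw, hProw]; ring
      have hcore := core Q hd0Q
        (fun a b hab => by
          have := pair_le Q hQrow a b hab
          linarith)
        (fun l => P i l - P j l) hx
      have hP : (∑ l, |P i l - P j l|) / 2 ≤ dobrushin P := pair_le P hProw i j hij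
      have hrw : ∑ k, |(P * Q) i k - (P * Q) j k| = ∑ k, |∑ l, (P i l - P j l) * Q l k| :=
        Finset.sum_congr rfl fun k _ => by rw [hdiff k]
      have : (∑ k, |(P * Q) i k - (P * Q) j k|) / 2 ≤ dobrushin P * dobrushin Q := by
        rw [hrw]
        calc (∑ k, |∑ l, (P i l - P j l) * Q l k|) / 2
            ≤ dobrushin Q * ((∑ l, |P i l - P j l|) / 2) := hcore
          _ ≤ dobrushin Q * dobrushin P := mul_le_mul_of_nonneg_left hP hd0Q
          _ = dobrushin P * dobrushin Q := mul_comm _ _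
      unfold dobrushin at this
      linarith
    have := le_ciInf key
    linarith [this]
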